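/- For each j ∈ {1, …, ℓ}, the set L̂_j = {(b | g; f₁, …, f_ℓ) in the multiple almost-Riordan group : f_j = t} is a subgroup of the multiple almost-Riordan group. -/

import Mathlib

open PowerSeries

/-- Composition `g ∘ f` of formal power series (meaningful when `f` has zero
constant term). -/
noncomputable def pcomp {K : Type*} [Field K] (g f : PowerSeries K) : PowerSeries K :=
  PowerSeries.mk fun n => ∑ k ∈ Finset.range (n + 1), coeff k g * coeff n (f ^ k)

/-- `f/t`: the coefficient shift of a power series. -/
noncomputable def pdivX {K : Type*} [Field K] (f : PowerSeries K) : PowerSeries K :=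
  PowerSeries.mk fun n => coeff (n + 1) f

/-- `g ∈ K[[t^ℓ]]`. -/
def InTl {K : Type*} [Field K] (ℓ : ℕ) (g : PowerSeries K) : Prop :=
  ∀ n : ℕ, ¬ ℓ ∣ n → coeff n g = 0

/-- A normalized multiplier function: `f ∈ t·K[[t^ℓ]]` with `f'(0) = 1`. -/
def IsMultN {K : Type*} [Field K] (ℓ : ℕ) (f : PowerSeries K) : Prop :=
  constantCoeff f = 0 ∧ (∀ n : ℕ, n % ℓ ≠ 1 % ℓ → coeff n f = 0) ∧ coeff 1 f = 1

/-- The underlying data of a multiple almost-Riordan array `(b | g; f₁,…,f_ℓ, h)`. -/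
abbrev MaR (K : Type*) [Field K] (m : ℕ) :=
  PowerSeries K × PowerSeries K × (Fin (m + 1) → PowerSeries K) × PowerSeries K

/-- A normalized multiple almost-Riordan array `(b | g; f₁, …, f_ℓ)` together
with its chosen normalized `ℓ`-th root `h` of `f₁⋯f_ℓ` (`ℓ = m + 1`). -/
def IsMaRN {K : Type*} [Field K] (m : ℕ) (p : MaR K m) : Prop :=
  InTl (m + 1) p.1 ∧ constantCoeff p.1 = 1 ∧
    InTl (m + 1) p.2.1 ∧ constantCoeff p.2.1 = 1 ∧
    (∀ j, IsMultN (m + 1) (p.2.2.1 j)) ∧ IsMultN (m + 1) p.2.2.2 ∧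
    p.2.2.2 ^ (m + 1) = ∏ j, p.2.2.1 j

/-- The multiple almost-Riordan product. -/
noncomputable def maMul {K : Type*} [Field K] {m : ℕ} (p q : MaR K m) : MaR K m :=
  (C (constantCoeff q.1) * p.1 +
      p.2.1 * (pdivX (p.2.2.1 (Fin.last m)))⁻¹ *
        (pcomp q.1 p.2.2.2 - C (constantCoeff q.1)),
    p.2.1 * pcomp q.2.1 p.2.2.2,
    fun j => pdivX (p.2.2.1 j) * (pdivX p.2.2.2)⁻¹ * pcomp (q.2.2.1 j) p.2.2.2,
    pcomp q.2.2.2 p.2.2.2)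

namespace MaRAux
variable {K : Type*} [Field K]

lemma coeff_pcomp (g f : PowerSeries K) (n : ℕ) :
    coeff n (pcomp g f) = ∑ k ∈ Finset.range (n + 1), coeff k g * coeff n (f ^ k) :=
  coeff_mk _ _

lemma coeff_pow_eq_zero {f : PowerSeries K} (hf : constantCoeff f = 0) {n k : ℕ}
    (h : n < k) : coeff n (f ^ k) = 0 := by
  have hd : (X : PowerSeries K) ^ k ∣ f ^ k :=
    pow_dvd_pow_of_dvd (X_dvd_iff.mpr hf) k
  exact X_pow_dvd_iff.mp hd n h

lemma coeff_pcomp_ge {f : PowerSeries K} (hf : constantCoeff f = 0) (g : PowerSeries K)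
    {n N : ℕ} (h : n < N) :
    coeff n (pcomp g f) = ∑ k ∈ Finset.range N, coeff k g * coeff n (f ^ k) := by
  rw [coeff_pcomp]
  refine Finset.sum_subset (by intro k hk; simp only [Finset.mem_range] at *; omega) ?_
  intro k hk hnk
  simp only [Finset.mem_range] at hk hnk
  rw [coeff_pow_eq_zero hf (by omega), mul_zero]

lemma coeff_aeval {f : PowerSeries K} (hf : constantCoeff f = 0) (p : Polynomial K) (n : ℕ) :
    coeff n (Polynomial.aeval f p) = ∑ k ∈ Finset.range (n + 1), p.coeff k * coeff n (f ^ k) := by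
  rw [Polynomial.aeval_eq_sum_range]
  rw [map_sum]
  simp only [coeff_smul, smul_eq_mul]
  set N := max (n + 1) (p.natDegree + 1) with hN
  rw [show (∑ i ∈ Finset.range (p.natDegree + 1), p.coeff i * coeff n (f ^ i))
      = ∑ i ∈ Finset.range N, p.coeff i * coeff n (f ^ i) from
    Finset.sum_subset (by intro k hk; simp only [Finset.mem_range] at *; omega)
      (fun k hk hnk => by
        simp only [Finset.mem_range] at hk hnk
        rw [p.coeff_eq_zero_of_natDegree_lt (by omega), zero_mul])]
  exact (Finset.sum_subset (by intro k hk; simp only [Finset.mem_range] at *; omega)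
      (fun k hk hnk => by
        simp only [Finset.mem_range] at hk hnk
        rw [coeff_pow_eq_zero hf (by omega), mul_zero])).symm

lemma coeff_pcomp_trunc {f : PowerSeries K} (hf : constantCoeff f = 0) (g : PowerSeries K)
    {n N : ℕ} (h : n < N) :
    coeff n (pcomp g f) = coeff n (Polynomial.aeval f (trunc N g)) := by
  rw [coeff_pcomp, coeff_aeval hf]
  refine Finset.sum_congr rfl fun k hk => ?_
  simp only [Finset.mem_range] at hk
  rw [coeff_trunc]
  rw [if_pos (by omega)]

@[simp] lemma constantCoeff_pcomp (g f : PowerSeries K) :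
    constantCoeff (pcomp g f) = constantCoeff g := by
  rw [← coeff_zero_eq_constantCoeff, coeff_pcomp]
  simp

lemma pcomp_C (a : K) (f : PowerSeries K) : pcomp (C a) f = C a := by
  ext n
  rw [coeff_pcomp]
  rw [Finset.sum_eq_single 0]
  · simp [coeff_C]
  · intro k hk hk0
    rw [coeff_C, if_neg hk0, zero_mul]
  · simp

lemma pcomp_one (f : PowerSeries K) : pcomp 1 f = 1 := by
  have := pcomp_C (1 : K) f; simpa using this

lemma pcomp_add (a b f : PowerSeries K) : pcomp (a + b) f = pcomp a f + pcomp b f := by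
  ext n
  simp only [coeff_pcomp, map_add, add_mul, Finset.sum_add_distrib]

lemma pcomp_sub (a b f : PowerSeries K) : pcomp (a - b) f = pcomp a f - pcomp b f := by
  ext n
  simp only [coeff_pcomp, map_sub, sub_mul, Finset.sum_sub_distrib]

lemma pcomp_X {f : PowerSeries K} (hf : constantCoeff f = 0) : pcomp X f = f := by
  ext n
  rw [coeff_pcomp, Finset.sum_eq_single 1]
  · simp
  · intro k hk hk1
    rw [coeff_X, if_neg hk1, zero_mul]
  · intro h
    simp only [Finset.mem_range] at h
    have hn : n = 0 := by omega
    subst hn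
    simp [hf]

lemma pcomp_X_right (g : PowerSeries K) : pcomp g X = g := by
  ext n
  rw [coeff_pcomp, Finset.sum_eq_single n]
  · simp [coeff_X_pow]
  · intro k hk hkn
    rw [coeff_X_pow, if_neg (fun h => hkn h.symm), mul_zero]
  · simp

lemma pcomp_mul {f : PowerSeries K} (hf : constantCoeff f = 0) (a b : PowerSeries K) :
    pcomp (a * b) f = pcomp a f * pcomp b f := by
  ext n
  rw [coeff_pcomp_trunc hf (a * b) (Nat.lt_succ_self n)]
  have h1 : coeff n (Polynomial.aeval f (trunc (n+1) (a * b)))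
      = coeff n (Polynomial.aeval f (trunc (n+1) a * trunc (n+1) b)) := by
    rw [coeff_aeval hf, coeff_aeval hf]
    refine Finset.sum_congr rfl fun k hk => ?_
    simp only [Finset.mem_range] at hk
    congr 1
    rw [coeff_trunc, if_pos (by omega), coeff_mul, Polynomial.coeff_mul]
    refine Finset.sum_congr rfl fun x hx => ?_
    rw [Finset.HasAntidiagonal.mem_antidiagonal] at hx
    rw [coeff_trunc, coeff_trunc, if_pos (by omega), if_pos (by omega)]
  rw [h1, map_mul, coeff_mul, coeff_mul]
  refine Finset.sum_congr rfl fun x hx => ?_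
  rw [Finset.HasAntidiagonal.mem_antidiagonal] at hx
  rw [← coeff_pcomp_trunc hf a (by omega), ← coeff_pcomp_trunc hf b (by omega)]

lemma pcomp_pow {f : PowerSeries K} (hf : constantCoeff f = 0) (a : PowerSeries K) (k : ℕ) :
    pcomp (a ^ k) f = (pcomp a f) ^ k := by
  induction k with
  | zero => simpa using pcomp_one f
  | succ k ih => rw [pow_succ, pow_succ, pcomp_mul hf, ih]

lemma pcomp_inv {f a : PowerSeries K} (hf : constantCoeff f = 0)
    (ha : constantCoeff a ≠ 0) : pcomp a⁻¹ f = (pcomp a f)⁻¹ := by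
  rw [PowerSeries.eq_inv_iff_mul_eq_one (by rwa [constantCoeff_pcomp])]
  rw [← pcomp_mul hf, PowerSeries.inv_mul_cancel a ha, pcomp_one]

lemma pcomp_assoc {b c : PowerSeries K} (hb : constantCoeff b = 0)
    (hc : constantCoeff c = 0) (a : PowerSeries K) :
    pcomp (pcomp a b) c = pcomp a (pcomp b c) := by
  ext n
  rw [coeff_pcomp, coeff_pcomp]
  have : ∀ k ∈ Finset.range (n + 1),
      coeff k a * coeff n ((pcomp b c) ^ k)
        = ∑ i ∈ Finset.range (n + 1), coeff k a * (coeff i (b ^ k) * coeff n (c ^ i)) := by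
    intro k _
    rw [← pcomp_pow hc, coeff_pcomp, Finset.mul_sum]
  rw [Finset.sum_congr rfl this, Finset.sum_comm]
  refine Finset.sum_congr rfl fun i hi => ?_
  simp only [Finset.mem_range] at hi
  rw [coeff_pcomp_ge hb a hi, Finset.sum_mul]
  refine Finset.sum_congr rfl fun k _ => by ring


/-- support of `f^k` lies in residues `k mod ℓ` when `f` is supported in `1 mod ℓ`. -/
lemma coeff_pow_mod {ℓ : ℕ} {f : PowerSeries K}
    (hf : ∀ n : ℕ, n % ℓ ≠ 1 % ℓ → coeff n f = 0) :
    ∀ k n : ℕ, n % ℓ ≠ k % ℓ → coeff n (f ^ k) = 0 := by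
  intro k
  induction k with
  | zero =>
    intro n hn
    rw [pow_zero, coeff_one, if_neg]
    intro h; subst h; simp at hn
  | succ k ih =>
    intro n hn
    rw [pow_succ, coeff_mul]
    refine Finset.sum_eq_zero fun x hx => ?_
    rw [Finset.HasAntidiagonal.mem_antidiagonal] at hx
    by_cases hu : x.1 % ℓ = k % ℓ
    · by_cases hv : x.2 % ℓ = 1 % ℓ
      · exfalso
        apply hn
        rw [← hx, Nat.add_mod, hu, hv, ← Nat.add_mod]
      · rw [hf x.2 hv, mul_zero]
    · rw [ih x.1 hu, zero_mul]

lemma InTl.mul {ℓ : ℕ} {a b : PowerSeries K} (ha : InTl ℓ a) (hb : InTl ℓ b) :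
    InTl ℓ (a * b) := by
  intro n hn
  rw [coeff_mul]
  refine Finset.sum_eq_zero fun x hx => ?_
  rw [Finset.HasAntidiagonal.mem_antidiagonal] at hx
  by_cases hu : ℓ ∣ x.1
  · rw [hb x.2 (fun h => hn (hx ▸ Nat.dvd_add hu h)), mul_zero]
  · rw [ha x.1 hu, zero_mul]

lemma InTl.add {ℓ : ℕ} {a b : PowerSeries K} (ha : InTl ℓ a) (hb : InTl ℓ b) :
    InTl ℓ (a + b) := fun n hn => by rw [map_add, ha n hn, hb n hn, add_zero]

lemma InTl.sub {ℓ : ℕ} {a b : PowerSeries K} (ha : InTl ℓ a) (hb : InTl ℓ b) :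
    InTl ℓ (a - b) := fun n hn => by rw [map_sub, ha n hn, hb n hn, sub_zero]

lemma InTl.C {ℓ : ℕ} (x : K) : InTl ℓ (C x) := fun n hn => by
  rw [coeff_C, if_neg]; intro h; subst h; exact hn (dvd_zero ℓ)

lemma InTl.one {ℓ : ℕ} : InTl ℓ (1 : PowerSeries K) := by
  have := InTl.C (K := K) (ℓ := ℓ) 1; rwa [map_one] at this

lemma InTl.inv {ℓ : ℕ} {a : PowerSeries K} (ha : InTl ℓ a) : InTl ℓ a⁻¹ := by
  intro n
  induction n using Nat.strong_induction_on with
  | _ n ih =>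
    intro hn
    have hn0 : n ≠ 0 := fun h => hn (h ▸ dvd_zero ℓ)
    rw [coeff_inv, if_neg hn0]
    rw [show ∑ x ∈ Finset.HasAntidiagonal.antidiagonal n,
        (if x.2 < n then coeff x.1 a * coeff x.2 a⁻¹ else 0) = 0 from
      Finset.sum_eq_zero fun x hx => by
        rw [Finset.HasAntidiagonal.mem_antidiagonal] at hx
        by_cases hlt : x.2 < n
        · rw [if_pos hlt]
          by_cases hv : ℓ ∣ x.2
          · rw [ha x.1 (fun h => hn (hx ▸ Nat.dvd_add h hv)), zero_mul]
          · rw [ih x.2 hlt hv, mul_zero]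
        · rw [if_neg hlt], mul_zero]

/-- `Supp1 ℓ f`: supported in degrees `≡ 1 [mod ℓ]`. -/
def Supp1 (ℓ : ℕ) (f : PowerSeries K) : Prop :=
  ∀ n : ℕ, n % ℓ ≠ 1 % ℓ → coeff n f = 0

lemma InTl.mul_supp1 {ℓ : ℕ} {a b : PowerSeries K} (ha : InTl ℓ a) (hb : Supp1 ℓ b) :
    Supp1 ℓ (a * b) := by
  intro n hn
  rw [coeff_mul]
  refine Finset.sum_eq_zero fun x hx => ?_
  rw [Finset.HasAntidiagonal.mem_antidiagonal] at hx
  by_cases hu : ℓ ∣ x.1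
  · by_cases hv : x.2 % ℓ = 1 % ℓ
    · exfalso
      apply hn
      obtain ⟨c, hc⟩ := hu
      rw [← hx, Nat.add_mod, hc, Nat.mul_mod_right, hv, zero_add,
        Nat.mod_mod_of_dvd 1 dvd_rfl]
    · rw [hb x.2 hv, mul_zero]
  · rw [ha x.1 (by rwa [Nat.dvd_iff_mod_eq_zero] at hu ⊢), zero_mul]

lemma supp1_pcomp {ℓ : ℕ} {g f : PowerSeries K} (hg : Supp1 ℓ g) (hf : Supp1 ℓ f) :
    Supp1 ℓ (pcomp g f) := by
  intro n hn
  rw [coeff_pcomp]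
  refine Finset.sum_eq_zero fun k _ => ?_
  by_cases hk : k % ℓ = 1 % ℓ
  · rw [coeff_pow_mod hf k n (by omega), mul_zero]
  · rw [hg k hk, zero_mul]

lemma intl_pcomp {ℓ : ℕ} {g f : PowerSeries K} (hg : InTl ℓ g) (hf : Supp1 ℓ f) :
    InTl ℓ (pcomp g f) := by
  intro n hn
  rw [coeff_pcomp]
  refine Finset.sum_eq_zero fun k _ => ?_
  by_cases hk : ℓ ∣ k
  · refine (mul_eq_zero.mpr (Or.inr (coeff_pow_mod hf k n ?_)))
    rw [Nat.dvd_iff_mod_eq_zero] at hk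
    rw [Nat.dvd_iff_mod_eq_zero] at hn
    omega
  · rw [hg k hk, zero_mul]

/- pdivX lemmas -/
lemma coeff_pdivX (f : PowerSeries K) (n : ℕ) : coeff n (pdivX f) = coeff (n + 1) f :=
  coeff_mk _ _

lemma X_mul_pdivX {f : PowerSeries K} (hf : constantCoeff f = 0) : X * pdivX f = f := by
  ext n
  cases n with
  | zero =>
    simp only [coeff_zero_eq_constantCoeff, map_mul, constantCoeff_X, zero_mul, hf]
  | succ n => rw [coeff_succ_X_mul, coeff_pdivX]

lemma pdivX_X_mul (w : PowerSeries K) : pdivX (X * w) = w := by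
  ext n
  rw [coeff_pdivX, coeff_succ_X_mul]

lemma pdivX_X : pdivX (X : PowerSeries K) = 1 := by
  have : (X : PowerSeries K) = X * 1 := by rw [mul_one]
  rw [this, pdivX_X_mul]

lemma constantCoeff_pdivX (f : PowerSeries K) : constantCoeff (pdivX f) = coeff 1 f := by
  rw [← coeff_zero_eq_constantCoeff, coeff_pdivX]

lemma intl_pdivX {ℓ : ℕ} {f : PowerSeries K} (hf : Supp1 ℓ f) : InTl ℓ (pdivX f) := by
  intro n hn
  rw [coeff_pdivX]
  apply hf
  intro h
  apply hn
  have h' : Nat.ModEq ℓ 1 (n + 1) := h.symm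
  have := (Nat.modEq_iff_dvd' (by omega)).mp h'
  simpa using this

/- coeff 1 of a product -/
lemma coeff1_mul (a b : PowerSeries K) :
    coeff 1 (a * b) = constantCoeff a * coeff 1 b + coeff 1 a * constantCoeff b := by
  rw [coeff_mul, Finset.Nat.sum_antidiagonal_eq_sum_range_succ_mk]
  rw [Finset.sum_range_succ, Finset.sum_range_succ, Finset.sum_range_zero]
  simp [coeff_zero_eq_constantCoeff]

lemma coeff_one_pcomp (g f : PowerSeries K) :
    coeff 1 (pcomp g f) = coeff 1 g * coeff 1 f := by
  rw [coeff_pcomp]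
  rw [Finset.sum_range_succ, Finset.sum_range_one]
  simp [coeff_one]

lemma coeff_pow_self {f : PowerSeries K} (hf : constantCoeff f = 0) (n : ℕ) :
    coeff n (f ^ n) = (coeff 1 f) ^ n := by
  induction n with
  | zero => simp
  | succ n ih =>
    rw [pow_succ, coeff_mul, Finset.Nat.sum_antidiagonal_eq_sum_range_succ_mk]
    rw [Finset.sum_eq_single n]
    · rw [show n + 1 - n = 1 from by omega, ih, pow_succ]
    · intro k hk hkn
      simp only [Finset.mem_range] at hk
      rcases Nat.lt_or_ge k n with h | h
      · rw [coeff_pow_eq_zero hf h, zero_mul]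
      · have : k = n + 1 := by omega
        subst this
        rw [Nat.sub_self, coeff_zero_eq_constantCoeff, hf, mul_zero]
    · intro h
      simp only [Finset.mem_range] at h
      omega


/-- coefficients of the compositional inverse. -/
noncomputable def revC (h : PowerSeries K) : ℕ → K
  | 0 => 0
  | 1 => 1
  | n + 2 => -∑ k ∈ (Finset.range (n + 2)).attach,
      revC h k * coeff (n + 2) (h ^ (k : ℕ))
  decreasing_by exact Finset.mem_range.mp k.2

/-- the compositional inverse series. -/
noncomputable def rev (h : PowerSeries K) : PowerSeries K := PowerSeries.mk (revC h)

lemma coeff_rev (h : PowerSeries K) (n : ℕ) : coeff n (rev h) = revC h n := coeff_mk _ _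

lemma revC_zero (h : PowerSeries K) : revC h 0 = 0 := by rw [revC]

lemma revC_one (h : PowerSeries K) : revC h 1 = 1 := by rw [revC]

lemma revC_add_two (h : PowerSeries K) (n : ℕ) :
    revC h (n + 2) = -∑ k ∈ Finset.range (n + 2), revC h k * coeff (n + 2) (h ^ k) := by
  rw [revC, ← Finset.sum_attach (Finset.range (n + 2)) (fun k => revC h k * coeff (n + 2) (h ^ k))]

@[simp] lemma constantCoeff_rev (h : PowerSeries K) : constantCoeff (rev h) = 0 := by
  rw [← coeff_zero_eq_constantCoeff, coeff_rev, revC_zero]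

@[simp] lemma coeff_one_rev (h : PowerSeries K) : coeff 1 (rev h) = 1 := by
  rw [coeff_rev, revC_one]

lemma pcomp_rev_self {h : PowerSeries K} (h0 : constantCoeff h = 0)
    (h1 : coeff 1 h = 1) : pcomp (rev h) h = X := by
  ext n
  rw [coeff_pcomp]
  match n with
  | 0 => simp [coeff_rev, revC_zero]
  | 1 =>
    rw [Finset.sum_range_succ, Finset.sum_range_one]
    simp [coeff_rev, revC_zero, revC_one, h1, coeff_one]
  | (n + 2) =>
    rw [Finset.sum_range_succ]
    simp only [coeff_rev]
    rw [revC_add_two, coeff_pow_self h0, h1, one_pow, mul_one, add_neg_cancel]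
    rw [coeff_X, if_neg (by omega)]

lemma rev_supp1 {ℓ : ℕ} {h : PowerSeries K} (hs : Supp1 ℓ h) : Supp1 ℓ (rev h) := by
  intro n
  rw [coeff_rev]
  induction n using Nat.strong_induction_on with
  | _ n ih =>
    intro hn
    match n with
    | 0 => exact revC_zero h
    | 1 => exact absurd rfl hn
    | (n + 2) =>
      rw [revC_add_two]
      rw [Finset.sum_eq_zero, neg_zero]
      intro k hk
      simp only [Finset.mem_range] at hk
      by_cases hkm : k % ℓ = 1 % ℓ
      · rw [coeff_pow_mod hs k (n + 2) (by omega), mul_zero]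
      · rw [ih k (by omega) hkm, zero_mul]

lemma rev_pcomp_self {h : PowerSeries K} (h0 : constantCoeff h = 0)
    (h1 : coeff 1 h = 1) : pcomp h (rev h) = X := by
  set r := rev h with hr
  have hr0 : constantCoeff r = 0 := constantCoeff_rev h
  have hr1 : coeff 1 r = 1 := coeff_one_rev h
  have hA : pcomp r h = X := pcomp_rev_self h0 h1
  have hB : pcomp (rev r) r = X := pcomp_rev_self hr0 hr1
  have hs : rev r = h := by
    have e1 : pcomp (pcomp (rev r) r) h = h := by rw [hB, pcomp_X h0]
    have e2 : pcomp (pcomp (rev r) r) h = rev r := by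
      rw [pcomp_assoc hr0 h0, hA, pcomp_X_right]
    rw [← e2, e1]
  rw [← hs, hB]


lemma psinv_one : (1 : PowerSeries K)⁻¹ = 1 := by
  rw [PowerSeries.inv_eq_iff_mul_eq_one (by simp)]; simp

lemma pcomp_prod {f : PowerSeries K} (hf : constantCoeff f = 0) {ι : Type*}
    (s : Finset ι) (F : ι → PowerSeries K) :
    pcomp (∏ i ∈ s, F i) f = ∏ i ∈ s, pcomp (F i) f := by
  classical
  induction s using Finset.induction_on with
  | empty => simpa using pcomp_one f
  | insert a s hx ih => rw [Finset.prod_insert hx, Finset.prod_insert hx, pcomp_mul hf, ih]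

lemma pow_pdivX_eq {ℓ : ℕ} {hp : PowerSeries K} {f : Fin ℓ → PowerSeries K}
    (h0 : constantCoeff hp = 0) (hf0 : ∀ i, constantCoeff (f i) = 0)
    (he : hp ^ ℓ = ∏ i, f i) : (pdivX hp) ^ ℓ = ∏ i, pdivX (f i) := by
  have hX : (X : PowerSeries K) ^ ℓ ≠ 0 := pow_ne_zero _ X_ne_zero
  apply mul_left_cancel₀ hX
  calc (X : PowerSeries K) ^ ℓ * pdivX hp ^ ℓ = (X * pdivX hp) ^ ℓ := by rw [mul_pow]
    _ = hp ^ ℓ := by rw [X_mul_pdivX h0]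
    _ = ∏ i, f i := he
    _ = ∏ i, (X * pdivX (f i)) :=
        Finset.prod_congr rfl fun i _ => (X_mul_pdivX (hf0 i)).symm
    _ = X ^ ℓ * ∏ i, pdivX (f i) := by
        rw [Finset.prod_mul_distrib, Finset.prod_const, Finset.card_univ, Fintype.card_fin]

lemma isMultN_X {ℓ : ℕ} : IsMultN ℓ (X : PowerSeries K) := by
  refine ⟨constantCoeff_X, fun n hn => ?_, by simp⟩
  rw [coeff_X, if_neg]
  intro h; subst h; exact hn rfl

end MaRAux

open MaRAux

/-- For each `j`, the set `L̂_j = {(b | g; f₁, …, f_ℓ) : f_j = t}` is a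
subgroup of the multiple almost-Riordan group. -/
theorem multiple_almost_riordan_Lhat_subgroup {K : Type*} [Field K] [CharZero K]
    (m : ℕ) (j : Fin (m + 1)) :
    (∀ p q : MaR K m, (IsMaRN m p ∧ p.2.2.1 j = X) → (IsMaRN m q ∧ q.2.2.1 j = X) →
      (IsMaRN m (maMul p q) ∧ (maMul p q).2.2.1 j = X)) ∧
    (IsMaRN m ((1, 1, fun _ => X, X) : MaR K m) ∧
      ((1, 1, fun _ => X, X) : MaR K m).2.2.1 j = X) ∧
    (∀ p : MaR K m, (IsMaRN m p ∧ p.2.2.1 j = X) →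
      ∃ q : MaR K m, (IsMaRN m q ∧ q.2.2.1 j = X) ∧
        maMul p q = (1, 1, fun _ => X, X) ∧ maMul q p = (1, 1, fun _ => X, X)) := by
  refine ⟨?_, ?_, ?_⟩
  · -- closure under multiplication
    rintro ⟨b, g, f, h⟩ ⟨c, d, f', h'⟩ ⟨⟨hIb, hb0, hIg, hg0, hf, hh, hpr⟩, hpj⟩
      ⟨⟨hIc, hc0, hId, hd0, hf', hh', hpr'⟩, hqj⟩
    dsimp only at hpj hqj hIb hb0 hIg hg0 hf hh hpr hIc hc0 hId hd0 hf' hh' hpr'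
    have hwne : constantCoeff (pdivX h) ≠ 0 := by
      rw [constantCoeff_pdivX, hh.2.2]; exact one_ne_zero
    have hpdne : pdivX h ≠ 0 := fun h0 => hwne (by rw [h0, map_zero])
    -- first component
    have hB1 : InTl (m + 1) (C (constantCoeff c) * b +
        g * (pdivX (f (Fin.last m)))⁻¹ * (pcomp c h - C (constantCoeff c))) :=
      InTl.add (InTl.mul (InTl.C _) hIb)
        (InTl.mul (InTl.mul hIg (InTl.inv (intl_pdivX (hf (Fin.last m)).2.1)))
          (InTl.sub (intl_pcomp hIc hh.2.1) (InTl.C _)))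
    have hB0 : constantCoeff (C (constantCoeff c) * b +
        g * (pdivX (f (Fin.last m)))⁻¹ * (pcomp c h - C (constantCoeff c))) = 1 := by
      simp [map_add, map_mul, map_sub, constantCoeff_pcomp, constantCoeff_C, hb0, hc0]
    -- second component
    have hG1 : InTl (m + 1) (g * pcomp d h) := InTl.mul hIg (intl_pcomp hId hh.2.1)
    have hG0 : constantCoeff (g * pcomp d h) = 1 := by
      rw [map_mul, constantCoeff_pcomp, hg0, hd0, one_mul]
    -- multipliers
    have hM : ∀ i, IsMultN (m + 1) (pdivX (f i) * (pdivX h)⁻¹ * pcomp (f' i) h) := by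
      intro i
      refine ⟨?_, ?_, ?_⟩
      · rw [map_mul, constantCoeff_pcomp, (hf' i).1, mul_zero]
      · exact InTl.mul_supp1
          (InTl.mul (intl_pdivX (hf i).2.1) (InTl.inv (intl_pdivX hh.2.1)))
          (supp1_pcomp (hf' i).2.1 hh.2.1)
      · simp [coeff1_mul, constantCoeff_pcomp, (hf' i).1, coeff_one_pcomp,
          (hf' i).2.2, hh.2.2, map_mul, constantCoeff_pdivX, (hf i).2.2,
          PowerSeries.constantCoeff_inv]
    -- the new h
    have hH : IsMultN (m + 1) (pcomp h' h) :=
      ⟨by rw [constantCoeff_pcomp, hh'.1], supp1_pcomp hh'.2.1 hh.2.1,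
        by rw [coeff_one_pcomp, hh'.2.2, hh.2.2, mul_one]⟩
    -- the root identity
    have hPr : (pcomp h' h) ^ (m + 1)
        = ∏ i, (pdivX (f i) * (pdivX h)⁻¹ * pcomp (f' i) h) := by
      have e1 : ∏ i : Fin (m + 1), (pdivX (f i) * (pdivX h)⁻¹ * pcomp (f' i) h)
          = ((pdivX h) ^ (m + 1) * ((pdivX h)⁻¹) ^ (m + 1)) * ∏ i, pcomp (f' i) h := by
        rw [Finset.prod_mul_distrib, Finset.prod_mul_distrib, Finset.prod_const,
          Finset.card_univ, Fintype.card_fin,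
          pow_pdivX_eq hh.1 (fun i => (hf i).1) hpr]
      rw [e1, ← mul_pow, PowerSeries.mul_inv_cancel _ hwne, one_pow, one_mul,
        ← pcomp_prod hh.1, ← hpr', pcomp_pow hh.1]
    have hMj : pdivX (f j) * (pdivX h)⁻¹ * pcomp (f' j) h = X := by
      rw [hpj, hqj, pdivX_X, one_mul, pcomp_X hh.1]
      apply mul_left_cancel₀ hpdne
      rw [← mul_assoc, PowerSeries.mul_inv_cancel _ hwne, one_mul,
        mul_comm (pdivX h) X, X_mul_pdivX hh.1]
    exact ⟨⟨hB1, hB0, hG1, hG0, hM, hH, hPr⟩, hMj⟩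
  · -- identity element
    exact ⟨⟨InTl.one, map_one _, InTl.one, map_one _, fun _ => isMultN_X, isMultN_X,
      by rw [Finset.prod_const, Finset.card_univ, Fintype.card_fin]⟩, rfl⟩
  · -- inverses
    rintro ⟨b, g, f, h⟩ ⟨⟨hIb, hb0, hIg, hg0, hf, hh, hpr⟩, hpj⟩
    dsimp only at hpj hIb hb0 hIg hg0 hf hh hpr
    set r := rev h with hrdef
    have r0 : constantCoeff r = 0 := constantCoeff_rev h
    have r1 : coeff 1 r = 1 := coeff_one_rev h
    have rsupp : Supp1 (m + 1) r := rev_supp1 hh.2.1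
    have rch : pcomp r h = X := pcomp_rev_self hh.1 hh.2.2
    have rhc : pcomp h r = X := rev_pcomp_self hh.1 hh.2.2
    have g0ne : constantCoeff g ≠ 0 := by rw [hg0]; exact one_ne_zero
    have w0 : ∀ i, constantCoeff (pdivX (f i)) = 1 := fun i => by
      rw [constantCoeff_pdivX, (hf i).2.2]
    have wne : ∀ i, constantCoeff (pdivX (f i)) ≠ 0 := fun i => by
      rw [w0 i]; exact one_ne_zero
    have hwne : constantCoeff (pdivX h) ≠ 0 := by
      rw [constantCoeff_pdivX, hh.2.2]; exact one_ne_zero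
    set A := (1 : PowerSeries K) + g⁻¹ * pdivX (f (Fin.last m)) * (1 - b) with hAdef
    have hA0 : constantCoeff A = 1 := by
      rw [hAdef]; simp [map_add, map_mul, map_sub, map_one, hb0]
    have hc0' : constantCoeff (pcomp A r) = 1 := by rw [constantCoeff_pcomp, hA0]
    have hpd : ∀ i, pdivX (pcomp (h * (pdivX (f i))⁻¹) r) = pcomp ((pdivX (f i))⁻¹) r := by
      intro i
      rw [pcomp_mul r0, rhc]
      exact pdivX_X_mul _
    have hpdinv : ∀ i,
        (pdivX (pcomp (h * (pdivX (f i))⁻¹) r))⁻¹ = pcomp (pdivX (f i)) r := by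
      intro i
      rw [hpd i, PowerSeries.inv_eq_iff_mul_eq_one
        (by rw [constantCoeff_pcomp, PowerSeries.constantCoeff_inv, w0 i, inv_one]
            exact one_ne_zero),
        ← pcomp_mul r0, PowerSeries.mul_inv_cancel _ (wne i), pcomp_one]
    refine ⟨(pcomp A r, pcomp g⁻¹ r, fun i => pcomp (h * (pdivX (f i))⁻¹) r, r),
      ⟨⟨?_, ?_, ?_, ?_, ?_, ?_, ?_⟩, ?_⟩, ?_, ?_⟩
    · exact intl_pcomp (InTl.add InTl.one
        (InTl.mul (InTl.mul (InTl.inv hIg) (intl_pdivX (hf (Fin.last m)).2.1))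
          (InTl.sub InTl.one hIb))) rsupp
    · exact hc0'
    · exact intl_pcomp (InTl.inv hIg) rsupp
    · rw [constantCoeff_pcomp, PowerSeries.constantCoeff_inv, hg0, inv_one]
    · intro i
      refine ⟨?_, ?_, ?_⟩
      · rw [constantCoeff_pcomp, map_mul, hh.1, zero_mul]
      · refine supp1_pcomp ?_ rsupp
        rw [mul_comm]
        exact InTl.mul_supp1 (InTl.inv (intl_pdivX (hf i).2.1)) hh.2.1
      · rw [coeff_one_pcomp, r1, mul_one, coeff1_mul, hh.1, zero_mul, zero_add,
          hh.2.2, one_mul, PowerSeries.constantCoeff_inv, w0 i, inv_one]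
    · exact ⟨r0, rsupp, r1⟩
    · -- r ^ (m+1) = ∏ q_i
      have key : (∏ i, (h * (pdivX (f i))⁻¹)) = X ^ (m + 1) := by
        rw [Finset.prod_mul_distrib, Finset.prod_const, Finset.card_univ, Fintype.card_fin]
        conv_lhs => rw [← X_mul_pdivX hh.1]
        rw [mul_pow, pow_pdivX_eq hh.1 (fun i => (hf i).1) hpr, mul_assoc,
          ← Finset.prod_mul_distrib,
          Finset.prod_congr rfl (fun i _ => PowerSeries.mul_inv_cancel _ (wne i)),
          Finset.prod_const_one, mul_one]
      show r ^ (m + 1) = ∏ i, pcomp (h * (pdivX (f i))⁻¹) r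
      rw [← pcomp_prod r0, key, pcomp_pow r0, pcomp_X r0]
    · show pcomp (h * (pdivX (f j))⁻¹) r = X
      rw [hpj, pdivX_X, psinv_one, mul_one, rhc]
    · -- maMul p q = identity
      have hcA : pcomp (pcomp A r) h = A := by
        rw [pcomp_assoc r0 hh.1, rch, pcomp_X_right]
      refine Prod.ext ?_ (Prod.ext ?_ (Prod.ext ?_ ?_))
      · show C (constantCoeff (pcomp A r)) * b +
            g * (pdivX (f (Fin.last m)))⁻¹ *
              (pcomp (pcomp A r) h - C (constantCoeff (pcomp A r))) = 1
        rw [hc0', map_one, one_mul, hcA, hAdef]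
        have e1 : g * g⁻¹ = 1 := PowerSeries.mul_inv_cancel _ g0ne
        have e2 : pdivX (f (Fin.last m)) * (pdivX (f (Fin.last m)))⁻¹ = 1 :=
          PowerSeries.mul_inv_cancel _ (wne _)
        linear_combination ((pdivX (f (Fin.last m)))⁻¹ * pdivX (f (Fin.last m)) * (1 - b)) * e1
          + (1 - b) * e2
      · show g * pcomp (pcomp g⁻¹ r) h = 1
        rw [pcomp_assoc r0 hh.1, rch, pcomp_X_right, PowerSeries.mul_inv_cancel _ g0ne]
      · funext i
        show pdivX (f i) * (pdivX h)⁻¹ * pcomp (pcomp (h * (pdivX (f i))⁻¹) r) h = X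
        rw [pcomp_assoc r0 hh.1, rch, pcomp_X_right]
        have e1 : pdivX (f i) * (pdivX (f i))⁻¹ = 1 := PowerSeries.mul_inv_cancel _ (wne i)
        have e2 : pdivX h * (pdivX h)⁻¹ = 1 := PowerSeries.mul_inv_cancel _ hwne
        have e3 : X * pdivX h = h := X_mul_pdivX hh.1
        linear_combination (X * (pdivX h)⁻¹ * pdivX h) * e1 + X * e2
          - (pdivX (f i) * (pdivX h)⁻¹ * (pdivX (f i))⁻¹) * e3
      · show pcomp r h = X
        exact rch
    · -- maMul q p = identity
      refine Prod.ext ?_ (Prod.ext ?_ (Prod.ext ?_ ?_))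
      · show C (constantCoeff b) * pcomp A r +
            pcomp g⁻¹ r * (pdivX (pcomp (h * (pdivX (f (Fin.last m)))⁻¹) r))⁻¹ *
              (pcomp b r - C (constantCoeff b)) = 1
        rw [hb0, map_one, one_mul, hpdinv,
          show pcomp b r - 1 = pcomp (b - 1) r from by rw [pcomp_sub, pcomp_one],
          ← pcomp_mul r0, ← pcomp_mul r0, ← pcomp_add, hAdef,
          show (1 : PowerSeries K) + g⁻¹ * pdivX (f (Fin.last m)) * (1 - b)
              + g⁻¹ * pdivX (f (Fin.last m)) * (b - 1) = 1 from by ring, pcomp_one]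
      · show pcomp g⁻¹ r * pcomp g r = 1
        rw [← pcomp_mul r0, PowerSeries.inv_mul_cancel _ g0ne, pcomp_one]
      · funext i
        show pdivX (pcomp (h * (pdivX (f i))⁻¹) r) * (pdivX r)⁻¹ * pcomp (f i) r = X
        rw [hpd i]
        have ef : pcomp (f i) r = r * pcomp (pdivX (f i)) r := by
          conv_lhs => rw [← X_mul_pdivX (hf i).1]
          rw [pcomp_mul r0, pcomp_X r0]
        rw [ef]
        have e1 : pcomp (pdivX (f i)) r * pcomp (pdivX (f i))⁻¹ r = 1 := by
          rw [← pcomp_mul r0, PowerSeries.mul_inv_cancel _ (wne i), pcomp_one]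
        have hpr0 : constantCoeff (pdivX r) ≠ 0 := by
          rw [constantCoeff_pdivX, r1]; exact one_ne_zero
        have e2 : pdivX r * (pdivX r)⁻¹ = 1 := PowerSeries.mul_inv_cancel _ hpr0
        have e3 : X * pdivX r = r := X_mul_pdivX r0
        linear_combination (X * (pdivX r)⁻¹ * pdivX r) * e1 + X * e2
          - (pcomp (pdivX (f i))⁻¹ r * (pdivX r)⁻¹ * pcomp (pdivX (f i)) r) * e3
      · show pcomp h r = X
        exact rhc
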